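/- Let D_∞ = ℤ ⋊ ℤ/2 be the infinite dihedral group and let N be a proper normal subgroup of D_∞ which is isomorphic to D_∞. Then N has index 2 in D_∞; in particular, the quotient D_∞ / N is isomorphic to ℤ/2. -/

import Mathlib

/-- The automorphism of `ℤ` (written multiplicatively) given by negation. -/
def negAutZ : MulAut (Multiplicative ℤ) := MulEquiv.inv (Multiplicative ℤ)

lemma negAutZ_sq : negAutZ ^ 2 = 1 := by
  ext z
  simp [negAutZ, pow_succ]

/-- The action of `ℤ/2` on `ℤ` in which the generator acts by negation. -/
def dihedralTwist : Multiplicative (ZMod 2) →* MulAut (Multiplicative ℤ) where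
  toFun a := negAutZ ^ (Multiplicative.toAdd a).val
  map_one' := by
    show negAutZ ^ (Multiplicative.toAdd (1 : Multiplicative (ZMod 2))).val = 1
    simp
  map_mul' x y := by
    show negAutZ ^ (Multiplicative.toAdd x + Multiplicative.toAdd y).val = _
    rw [ZMod.val_add, ← pow_eq_pow_mod _ negAutZ_sq, pow_add]

/-- The infinite dihedral group, as the semidirect product `ℤ ⋊ ℤ/2` where the
generator of `ℤ/2` acts on `ℤ` by negation; its elements are pairs `(m, a)` with
multiplication `(m, a)(m', a') = (m + (−1)^a m', a + a')`. -/
abbrev InfiniteDihedral : Type := Multiplicative ℤ ⋊[dihedralTwist] Multiplicative (ZMod 2)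

open Multiplicative SemidirectProduct

lemma twist_gen (z : Multiplicative ℤ) :
    dihedralTwist (ofAdd (1 : ZMod 2)) z = z⁻¹ := by
  show (negAutZ ^ (toAdd (ofAdd (1 : ZMod 2))).val) z = z⁻¹
  rw [toAdd_ofAdd, ZMod.val_one, pow_one]
  rfl

lemma negAutZ_pow_or (k : ℕ) : ∀ z : Multiplicative ℤ,
    (negAutZ ^ k) z = z ∨ (negAutZ ^ k) z = z⁻¹ := by
  induction k with
  | zero => intro z; left; rfl
  | succ n ih =>
    intro z
    rw [pow_succ', MulAut.mul_apply]
    rcases ih z with h | h <;> rw [h]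
    · right; rfl
    · left; show z⁻¹⁻¹ = z; simp

lemma z2_inv_eq (x : Multiplicative (ZMod 2)) : x⁻¹ = x := by
  apply Multiplicative.toAdd.injective
  exact ZMod.neg_eq_self_mod_two _

def toZ2 (c : ZMod 2) : InfiniteDihedral →* Multiplicative (ZMod 2) :=
  SemidirectProduct.lift (AddMonoidHom.toMultiplicative (Int.castAddHom (ZMod 2)))
    (AddMonoidHom.toMultiplicative (AddMonoidHom.mulLeft c))
    (by
      intro a
      refine MonoidHom.ext fun z => ?_
      simp only [MonoidHom.comp_apply, MulEquiv.coe_toMonoidHom, MulAut.conj_apply]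
      rw [mul_comm, inv_mul_cancel_left]
      show (AddMonoidHom.toMultiplicative (Int.castAddHom (ZMod 2))) ((negAutZ ^ _) z) = _
      rcases negAutZ_pow_or (toAdd a).val z with h | h <;> rw [h]
      rw [map_inv, z2_inv_eq])

lemma toZ2_apply (c : ZMod 2) (l : Multiplicative ℤ) (r : Multiplicative (ZMod 2)) :
    toZ2 c ⟨l, r⟩ = ofAdd (((toAdd l : ℤ) : ZMod 2) + c * toAdd r) := by
  have : toZ2 c ⟨l, r⟩ = ofAdd ((toAdd l : ℤ) : ZMod 2) * ofAdd (c * toAdd r) := rfl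
  rw [this, ← ofAdd_add]

lemma z2_cases (x : Multiplicative (ZMod 2)) : x = 1 ∨ x = ofAdd 1 := by revert x; decide

set_option maxHeartbeats 2000000 in
/-- a proper normal subgroup of `D_∞` which is isomorphic to `D_∞` has
index 2; in particular the quotient is isomorphic to `ℤ/2`. -/
theorem stmt_15 (N : Subgroup InfiniteDihedral) [N.Normal] (hproper : N ≠ ⊤)
    (hiso : Nonempty (N ≃* InfiniteDihedral)) :
    N.index = 2 ∧ Nonempty ((InfiniteDihedral ⧸ N) ≃* Multiplicative (ZMod 2)) := by
  obtain ⟨e⟩ := hiso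
  -- Step 1: N contains an element whose ZMod 2 component is the generator
  have hex : ∃ g : InfiniteDihedral, g ∈ N ∧ g.right = ofAdd (1 : ZMod 2) := by
    by_contra hcon
    push_neg at hcon
    have hright : ∀ g ∈ N, SemidirectProduct.right g = 1 := by
      intro g hg
      rcases z2_cases g.right with h | h
      · exact h
      · exact absurd h (hcon g hg)
    have hcomm : ∀ x y : N, x * y = y * x := by
      intro x y
      have hx := hright x x.2
      have hy := hright y y.2
      apply Subtype.ext
      show (x : InfiniteDihedral) * y = y * x
      ext
      · simp [mul_left, hx, hy, mul_comm]
      · simp [mul_right, hx, hy]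
    have hDcomm : ∀ u v : InfiniteDihedral, u * v = v * u := by
      intro u v
      have h1 := hcomm (e.symm u) (e.symm v)
      have h2 : e (e.symm u * e.symm v) = e (e.symm v * e.symm u) := by rw [h1]
      simpa using h2
    have hne := hDcomm (inl (ofAdd (1:ℤ))) (inr (ofAdd (1:ZMod 2)))
    have hl := congrArg SemidirectProduct.left hne
    simp [mul_left, left_inl, left_inr, right_inl, right_inr, twist_gen] at hl
    exact absurd hl (by decide)
  obtain ⟨g, hgN, hgr⟩ := hex
  set m : ℤ := toAdd g.left with hm
  set c : ZMod 2 := (m : ZMod 2) with hc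
  set φ' := toZ2 c with hφ
  -- (2, 0) ∈ N
  have hsq : (inl (ofAdd (2:ℤ)) : InfiniteDihedral)
      = (inl (ofAdd (1:ℤ)) * g * (inl (ofAdd (1:ℤ)))⁻¹) * g⁻¹ := by
    ext
    · simp only [mul_left, mul_right, inv_left, inv_right, left_inl, right_inl, hgr,
        z2_inv_eq, twist_gen, map_one, MulAut.one_apply, one_mul, mul_one, inv_one, inv_inv]
      apply Multiplicative.toAdd.injective
      simp
      show (2:ℤ) = 1 + toAdd g.left + 1 + -toAdd g.left
      omega
    · simp only [mul_right, inv_right, right_inl, hgr, z2_inv_eq, inv_one, one_mul, mul_one]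
      decide
  have h2N : (inl (ofAdd (2:ℤ)) : InfiniteDihedral) ∈ N := by
    rw [hsq]
    exact mul_mem (Subgroup.Normal.conj_mem ‹N.Normal› g hgN _) (inv_mem hgN)
  have hpow : ∀ j : ℤ, (inl (ofAdd (2 * j)) : InfiniteDihedral) ∈ N := by
    intro j
    have h := zpow_mem h2N j
    rwa [← map_zpow, ← ofAdd_zsmul, smul_eq_mul, mul_comm] at h
  -- ker φ' ≤ N
  have hker : φ'.ker ≤ N := by
    rintro ⟨l, r⟩ hx
    rw [MonoidHom.mem_ker, hφ, toZ2_apply] at hx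
    have hx' : ((toAdd l : ℤ) : ZMod 2) + c * toAdd r = 0 := by
      have := congrArg toAdd hx; simpa using this
    rcases z2_cases r with hr | hr
    · subst hr
      have h0 : ((toAdd l : ℤ) : ZMod 2) = 0 := by simpa using hx'
      obtain ⟨j, hj⟩ := (ZMod.intCast_zmod_eq_zero_iff_dvd _ 2).mp h0
      have hl : l = ofAdd (2 * j) := by
        apply Multiplicative.toAdd.injective
        simp only [toAdd_ofAdd]
        omega
      rw [show ((⟨l, 1⟩ : InfiniteDihedral)) = inl l from rfl, hl]
      exact hpow j
    · subst hr
      have h0 : (((toAdd l + m : ℤ)) : ZMod 2) = 0 := by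
        push_cast
        rw [hc] at hx'
        simpa using hx'
      obtain ⟨j, hj⟩ := (ZMod.intCast_zmod_eq_zero_iff_dvd _ 2).mp h0
      have hx3 : (⟨l, ofAdd 1⟩ : InfiniteDihedral) = inl (ofAdd (2 * (j - m))) * g := by
        ext
        · simp only [mul_left, right_inl, left_inl, map_one, MulAut.one_apply]
          apply Multiplicative.toAdd.injective
          simp only [toAdd_mul, toAdd_ofAdd, ← hm]
          show toAdd l = 2 * (j - m) + m
          omega
        · rw [mul_right, right_inl, hgr, one_mul]
      rw [hx3]
      exact mul_mem (hpow _) hgN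
  -- φ' surjective
  have hsurj : Function.Surjective φ' := by
    intro y
    rcases z2_cases y with hy | hy
    · exact ⟨1, by simp [hy]⟩
    · refine ⟨inl (ofAdd (1:ℤ)), ?_⟩
      rw [hy, show ((inl (ofAdd (1:ℤ)) : InfiniteDihedral)) = ⟨ofAdd 1, 1⟩ from rfl,
        hφ, toZ2_apply]
      simp
  have hkerindex : φ'.ker.index = 2 := by
    rw [Subgroup.index_ker, MonoidHom.range_eq_top.mpr hsurj, Subgroup.card_top,
      Nat.card_eq_fintype_card]
    decide
  have hdvd2 : N.index ∣ 2 := by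
    have h := Subgroup.index_dvd_of_le hker
    rwa [hkerindex] at h
  have hNindex : N.index = 2 := by
    rcases (Nat.prime_two).eq_one_or_self_of_dvd N.index hdvd2 with h | h
    · exact absurd (Subgroup.index_eq_one.mp h) hproper
    · exact h
  have hNker : N = φ'.ker := by
    have hrel := Subgroup.relIndex_mul_index hker
    rw [hNindex, hkerindex] at hrel
    have h1 : φ'.ker.relIndex N = 1 := by omega
    exact le_antisymm (Subgroup.relIndex_eq_one.mp h1) hker
  exact ⟨hNindex, ⟨(QuotientGroup.quotientMulEquivOfEq hNker).trans
    (QuotientGroup.quotientKerEquivOfSurjective φ' hsurj)⟩⟩
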